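/- Let (X_t) be a strictly stationary Markov process of order p₀ generated by a SEM without instantaneous effects, and let S be any set containing {X_{t-s-1},...,X_{t-s-p}} with p ≥ p₀, consisting only of variables at times ≤ t-s-1. Then S is a valid backdoor adjustment set for the intervention do(X_{c₂,t-s} = x) on the target X_{c₁,t} (s ≥ 1): S contains no descendants of (c₂, t-s) and blocks every backdoor path from (c₂, t-s) to (c₁, t) in the associated infinite DAG. -/

import Mathlib

namespace MintT

variable {V : Type*}

/-- `u` and `v` are adjacent in the undirected skeleton of the digraph `E`. -/
def Adj (E : V → V → Prop) (u v : V) : Prop := E u v ∨ E v u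

/-- `ℓ` is a path between `a` and `b`: consecutive vertices are adjacent and
there are no repeated vertices. -/
def IsPathBetween (E : V → V → Prop) (a b : V) (ℓ : List V) : Prop :=
  ℓ.Chain' (Adj E) ∧ ℓ.head? = some a ∧ ℓ.getLast? = some b ∧ ℓ.Nodup

/-- The vertex `v` at interior position `i+1` of `ℓ` is a collider. -/
def IsColliderOn (E : V → V → Prop) (ℓ : List V) (i : ℕ) (v : V) : Prop :=
  ∃ u w, ℓ[i]? = some u ∧ ℓ[i + 1]? = some v ∧ ℓ[i + 2]? = some w ∧ E u v ∧ E w v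

/-- The vertex `v` at interior position `i+1` of `ℓ` is a non-collider. -/
def IsNonColliderOn (E : V → V → Prop) (ℓ : List V) (i : ℕ) (v : V) : Prop :=
  ∃ u w, ℓ[i]? = some u ∧ ℓ[i + 1]? = some v ∧ ℓ[i + 2]? = some w ∧ ¬(E u v ∧ E w v)

/-- Descendant relation of the digraph `E` (reflexive-transitive closure). -/
def Desc (E : V → V → Prop) (v w : V) : Prop := Relation.ReflTransGen E v w

/-- `ℓ` is blocked by `Z` (standard d-separation blocking). -/
def Blocked (E : V → V → Prop) (Z : Set V) (ℓ : List V) : Prop :=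
  ∃ i v, (IsNonColliderOn E ℓ i v ∧ v ∈ Z) ∨
    (IsColliderOn E ℓ i v ∧ v ∉ Z ∧ ∀ w, Desc E v w → w ∉ Z)

/-- A backdoor path from `a` to `b`: a path whose first edge points into `a`. -/
def IsBackdoorPath (E : V → V → Prop) (a b : V) (ℓ : List V) : Prop :=
  IsPathBetween E a b ℓ ∧ ∃ u, ℓ[1]? = some u ∧ E u a

end MintT

/-- For a strictly stationary Markov process of order `p₀`
generated by a SEM without instantaneous effects (all edges of the associated
infinite DAG go strictly forward in time, reaching at most `p₀` steps back),
any set `S` of variables at times `≤ t-s-1` that contains all variables at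
times `t-s-1, …, t-s-p` with `p ≥ p₀` is a valid backdoor adjustment set for
the intervention `do(X_{c₂,t-s} = x)` on the target `X_{c₁,t}` (`s ≥ 1`):
`S` contains no descendants of `(c₂, t-s)`, and `S` blocks every backdoor path
from `(c₂, t-s)` to `(c₁, t)`. -/
theorem lagged_past_is_valid_backdoor_adjustment_set
    (l p₀ p : ℕ) (hp : p₀ ≤ p)
    (par : Fin l × ℤ → Fin l × ℤ → Prop)
    -- no instantaneous effects: all edges go strictly forward in time,
    -- by at most `p₀` steps:
    (hstruct : ∀ (d c : Fin l) (τ' τ : ℤ), par (d, τ') (c, τ) →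
      τ' < τ ∧ τ - τ' ≤ (p₀ : ℤ))
    (c₁ c₂ : Fin l) (t s : ℤ) (hs : 1 ≤ s)
    (S : Set (Fin l × ℤ))
    -- S consists only of variables at times ≤ t-s-1 …
    (hSpast : ∀ v ∈ S, v.2 ≤ t - s - 1)
    -- … and contains all variables at times t-s-p, …, t-s-1:
    (hSlags : ∀ v : Fin l × ℤ,
      t - s - (p : ℤ) ≤ v.2 → v.2 ≤ t - s - 1 → v ∈ S) :
    (∀ v ∈ S, ¬ Relation.TransGen par (c₂, t - s) v) ∧
      (∀ ℓ, MintT.IsBackdoorPath par (c₂, t - s) (c₁, t) ℓ →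
        MintT.Blocked par S ℓ) := by
  have hpp : (p₀ : ℤ) ≤ (p : ℤ) := by exact_mod_cast hp
  constructor
  · intro v hv hdesc
    have key : ∀ w, Relation.TransGen par (c₂, t - s) w → t - s < w.2 := by
      intro w hw
      induction hw with
      | single h => exact (hstruct _ _ _ _ (by simpa using h)).1
      | tail _ h ih =>
        have := (hstruct _ _ _ _ (by simpa using h)).1
        omega
    have h1 := key v hdesc
    have h2 := hSpast v hv
    omega
  · rintro ℓ ⟨⟨hchain, hhead, hlast, hnodup⟩, u, hu1, hpar⟩
    have h0 : ℓ[0]? = some (c₂, t - s) := by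
      rwa [← List.head?_eq_getElem?]
    have hu := hstruct u.1 c₂ u.2 (t - s) (by simpa using hpar)
    have hlen1 : 1 < ℓ.length := by
      by_contra h
      rw [List.getElem?_eq_none (by omega)] at hu1
      exact nomatch hu1
    have hune : u ≠ (c₁, t) := by
      intro h
      have : u.2 = t := by rw [h]
      omega
    have hlen2 : 2 < ℓ.length := by
      by_contra h
      have hl2 : ℓ.length = 2 := by omega
      rw [List.getLast?_eq_getElem?, hl2] at hlast
      norm_num at hlast
      rw [hu1] at hlast
      exact hune (Option.some.inj hlast)
    have hw : ℓ[2]? = some ℓ[2] := List.getElem?_eq_getElem hlen2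
    refine ⟨0, u, Or.inl ⟨⟨(c₂, t - s), ℓ[2], h0, hu1, hw, ?_⟩, ?_⟩⟩
    · rintro ⟨h1, -⟩
      have := (hstruct c₂ u.1 (t - s) u.2 (by simpa using h1)).1
      omega
    · exact hSlags u (by omega) (by omega)
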